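/- Let x ≥ 1 be an integer and let t, α₀,…,α_{x-1}, γ₀,…,γ_x ∈ ℂ, and let z ∈ ℂ with z ≠ 0 and z² ≠ 1. Then ((1-α₀γ₀)tz - α₀) · ∏_{k=1}^{x-1}((1-α_kγ_k)z + α_k) · ∏_{k=1}^{x}(1-γ_k z⁻¹) + ((1-α₀γ₀)z⁻¹ + α₀) · (tγ_x z + 1) · ∏_{k=1}^{x-1}((1-α_kγ_k)z⁻¹ + α_k)(1-γ_k z) + (t+1)z · ((1-α₀γ₀)z⁻¹ + α₀) · Σ_{j=1}^{x-1} [ ∏_{k=1}^{j-1}((1-α_kγ_k)z⁻¹ + α_k)(1-γ_k z) ] · [ ∏_{k=j+1}^{x-1}((1-α_kγ_k)z + α_k) ] · [ ∏_{k=j+1}^{x}(1-γ_k z⁻¹) ] = (1+tz²)/(z²-1) · [ ∏_{j=0}^{x-1}(α_j + (1-α_jγ_j)z) · ∏_{j=1}^{x}(1-γ_j z⁻¹) − ∏_{j=0}^{x-1}(α_j + (1-α_jγ_j)z⁻¹) · ∏_{j=1}^{x}(1-γ_j z) ]. -/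

import Mathlib

/-- The local "bracket" identity used in the inductive step. -/
lemma bracket_id (t z w a g g' : ℂ) (hzw : z * w = 1) :
    (z ^ 2 - 1) * ((t * g' * z + 1) * (((1 - a * g) * w + a) * (1 - g * z))
        + (t + 1) * z * (1 - g' * w)
        - ((1 - a * g) * z + a) * (1 - g' * w) * (t * g * z + 1))
      = (1 + t * z ^ 2) * (((1 - a * g) * z + a) * (1 - g' * w) * (1 - g * z)
        - ((1 - a * g) * w + a) * (1 - g * z) * (1 - g' * z)) := by
  have hz : z ≠ 0 := left_ne_zero_of_mul_eq_one hzw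
  have hw : w = z⁻¹ := (inv_eq_of_mul_eq_one_right hzw).symm
  subst hw
  field_simp
  ring

/-- Main inductive identity, with `w` playing the role of `z⁻¹`. -/
lemma helper_id (t z w : ℂ) (α γ : ℕ → ℂ) (hzw : z * w = 1) : ∀ n : ℕ,
    (z ^ 2 - 1) *
      (((1 - α 0 * γ 0) * t * z - α 0) *
          (∏ k ∈ Finset.Icc 1 n, ((1 - α k * γ k) * z + α k)) *
          (∏ k ∈ Finset.Icc 1 (n + 1), (1 - γ k * w))
        + ((1 - α 0 * γ 0) * w + α 0) * (t * γ (n + 1) * z + 1) *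
          ((∏ k ∈ Finset.Icc 1 n, ((1 - α k * γ k) * w + α k)) *
            ∏ k ∈ Finset.Icc 1 n, (1 - γ k * z))
        + (t + 1) * z * ((1 - α 0 * γ 0) * w + α 0) *
          ∑ j ∈ Finset.Icc 1 n,
            (∏ k ∈ Finset.Icc 1 (j - 1), ((1 - α k * γ k) * w + α k)) *
              (∏ k ∈ Finset.Icc 1 (j - 1), (1 - γ k * z)) *
              (∏ k ∈ Finset.Icc (j + 1) n, ((1 - α k * γ k) * z + α k)) *
              (∏ k ∈ Finset.Icc (j + 1) (n + 1), (1 - γ k * w)))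
    = (1 + t * z ^ 2) *
        (((1 - α 0 * γ 0) * z + α 0) *
            (∏ k ∈ Finset.Icc 1 n, ((1 - α k * γ k) * z + α k)) *
            (∏ k ∈ Finset.Icc 1 (n + 1), (1 - γ k * w))
          - ((1 - α 0 * γ 0) * w + α 0) *
            (∏ k ∈ Finset.Icc 1 n, ((1 - α k * γ k) * w + α k)) *
            (∏ k ∈ Finset.Icc 1 (n + 1), (1 - γ k * z))) := by
  intro n
  induction n with
  | zero =>
    have hz : z ≠ 0 := left_ne_zero_of_mul_eq_one hzw
    have hw : w = z⁻¹ := (inv_eq_of_mul_eq_one_right hzw).symm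
    subst hw
    simp only [show Finset.Icc 1 0 = (∅ : Finset ℕ) from rfl, Finset.prod_empty,
      Finset.sum_empty, Finset.Icc_self, Finset.prod_singleton, mul_zero, add_zero, mul_one]
    field_simp
    ring
  | succ n IH =>
    -- split the sum at its top index
    rw [Finset.sum_Icc_succ_top (by omega : (1:ℕ) ≤ n + 1)]
    simp only [Nat.add_sub_cancel]
    rw [Finset.Icc_eq_empty (by omega : ¬ (n + 1 + 1 : ℕ) ≤ n + 1), Finset.prod_empty,
      Finset.Icc_self, Finset.prod_singleton]
    -- factor the remaining sum
    have hsum : (∑ j ∈ Finset.Icc 1 n,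
          (∏ k ∈ Finset.Icc 1 (j - 1), ((1 - α k * γ k) * w + α k)) *
            (∏ k ∈ Finset.Icc 1 (j - 1), (1 - γ k * z)) *
            (∏ k ∈ Finset.Icc (j + 1) (n + 1), ((1 - α k * γ k) * z + α k)) *
            (∏ k ∈ Finset.Icc (j + 1) (n + 1 + 1), (1 - γ k * w)))
        = (∑ j ∈ Finset.Icc 1 n,
            (∏ k ∈ Finset.Icc 1 (j - 1), ((1 - α k * γ k) * w + α k)) *
              (∏ k ∈ Finset.Icc 1 (j - 1), (1 - γ k * z)) *
              (∏ k ∈ Finset.Icc (j + 1) n, ((1 - α k * γ k) * z + α k)) *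
              (∏ k ∈ Finset.Icc (j + 1) (n + 1), (1 - γ k * w))) *
            (((1 - α (n + 1) * γ (n + 1)) * z + α (n + 1)) * (1 - γ (n + 1 + 1) * w)) := by
      rw [Finset.sum_mul]
      refine Finset.sum_congr rfl fun j hj => ?_
      have hj' : j ≤ n := (Finset.mem_Icc.mp hj).2
      rw [Finset.prod_Icc_succ_top (by omega : j + 1 ≤ n + 1),
        Finset.prod_Icc_succ_top (by omega : j + 1 ≤ n + 1 + 1)]
      ring
    rw [hsum]
    repeat rw [Finset.prod_Icc_succ_top (by omega : (1:ℕ) ≤ n + 1 + 1)]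
    repeat rw [Finset.prod_Icc_succ_top (by omega : (1:ℕ) ≤ n + 1)]
    repeat rw [Finset.prod_Icc_succ_top (by omega : (1:ℕ) ≤ n + 1)] at IH
    linear_combination
      (((1 - α (n + 1) * γ (n + 1)) * z + α (n + 1)) * (1 - γ (n + 1 + 1) * w)) * IH
      + (((1 - α 0 * γ 0) * w + α 0) *
          (∏ k ∈ Finset.Icc 1 n, ((1 - α k * γ k) * w + α k)) *
          (∏ k ∈ Finset.Icc 1 n, (1 - γ k * z))) *
        bracket_id t z w (α (n + 1)) (γ (n + 1)) (γ (n + 1 + 1)) hzw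

/-- Proposition 4.2 of the paper: closed form of the one-particle
type I wavefunction of the free-fermionic six-vertex model under reflecting boundary,
with the Ivanov-type diagonal K-matrix. Here `α γ : ℕ → ℂ` give the parameters
`α₀,…,α_{x-1}` and `γ₀,…,γ_x`. -/
theorem one_particle_typeI (x : ℕ) (hx : 1 ≤ x) (t : ℂ) (α γ : ℕ → ℂ)
    (z : ℂ) (hz : z ≠ 0) (hz2 : z ^ 2 ≠ 1) :
    ((1 - α 0 * γ 0) * t * z - α 0) *
        (∏ k ∈ Finset.Icc 1 (x - 1), ((1 - α k * γ k) * z + α k)) *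
        (∏ k ∈ Finset.Icc 1 x, (1 - γ k * z⁻¹))
      + ((1 - α 0 * γ 0) * z⁻¹ + α 0) * (t * γ x * z + 1) *
        (∏ k ∈ Finset.Icc 1 (x - 1), ((1 - α k * γ k) * z⁻¹ + α k) * (1 - γ k * z))
      + (t + 1) * z * ((1 - α 0 * γ 0) * z⁻¹ + α 0) *
        ∑ j ∈ Finset.Icc 1 (x - 1),
          (∏ k ∈ Finset.Icc 1 (j - 1), ((1 - α k * γ k) * z⁻¹ + α k) * (1 - γ k * z)) *
          (∏ k ∈ Finset.Icc (j + 1) (x - 1), ((1 - α k * γ k) * z + α k)) *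
          (∏ k ∈ Finset.Icc (j + 1) x, (1 - γ k * z⁻¹))
    = (1 + t * z ^ 2) / (z ^ 2 - 1) *
        ((∏ j ∈ Finset.range x, (α j + (1 - α j * γ j) * z)) *
            (∏ j ∈ Finset.Icc 1 x, (1 - γ j * z⁻¹))
          - (∏ j ∈ Finset.range x, (α j + (1 - α j * γ j) * z⁻¹)) *
            (∏ j ∈ Finset.Icc 1 x, (1 - γ j * z))) := by
  obtain ⟨n, rfl⟩ := Nat.exists_eq_add_of_le hx
  simp only [show 1 + n = n + 1 from Nat.add_comm 1 n, Nat.add_sub_cancel]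
  rw [div_mul_eq_mul_div, eq_div_iff (sub_ne_zero_of_ne hz2)]
  simp only [Finset.prod_mul_distrib]
  have h1 : (∏ j ∈ Finset.range (n + 1), (α j + (1 - α j * γ j) * z))
      = ((1 - α 0 * γ 0) * z + α 0) *
        ∏ k ∈ Finset.Icc 1 n, ((1 - α k * γ k) * z + α k) := by
    rw [Finset.prod_range_eq_mul_Ico _ (Nat.succ_pos n), Nat.succ_eq_add_one, Finset.Ico_add_one_right_eq_Icc]
    exact congrArg₂ (· * ·) (by ring) (Finset.prod_congr rfl fun j _ => by ring)
  have h2 : (∏ j ∈ Finset.range (n + 1), (α j + (1 - α j * γ j) * z⁻¹))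
      = ((1 - α 0 * γ 0) * z⁻¹ + α 0) *
        ∏ k ∈ Finset.Icc 1 n, ((1 - α k * γ k) * z⁻¹ + α k) := by
    rw [Finset.prod_range_eq_mul_Ico _ (Nat.succ_pos n), Nat.succ_eq_add_one, Finset.Ico_add_one_right_eq_Icc]
    exact congrArg₂ (· * ·) (by ring) (Finset.prod_congr rfl fun j _ => by ring)
  rw [h1, h2]
  linear_combination helper_id t z z⁻¹ α γ (mul_inv_cancel₀ hz) n
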